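/- Let G be a compact abelian topological group acting continuously on a compact metrizable topological space M̂, and let M be a G-invariant open subset of M̂. Let A denote the set of subgroups of G that occur as stabilizers G_x = {g ∈ G : g•x = x} of points x ∈ M, and assume A is finite. Then there exists a family of open subsets (V_H)_{H ∈ A} of M, indexed by A, whose union is M and which satisfies: (1) each V_H is G-invariant; (2) for every x ∈ V_H one has G_x ⊆ H; (3) if V_H ∩ V_{H'} ≠ ∅ then H ⊆ H' or H' ⊆ H. Moreover, if in addition a family of open neighborhoods V_x of x (for x ∈ M) is given such that V_{g•x} = g•V_x for all g ∈ G and x ∈ M, then the cover can be chosen so that additionally V_H ⊆ ⋃_{x : G_x = H} V_x for every H ∈ A. -/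

import Mathlib

open Pointwise

private lemma good_cover_induction
    {G : Type*} [CommGroup G] [TopologicalSpace G] [IsTopologicalGroup G] [CompactSpace G]
    {X : Type*} [MetricSpace X] [MulAction G X] [ContinuousSMul G X]
    (M : Set X) (hMopen : IsOpen M) (hMpt : ∀ (g : G), ∀ x ∈ M, g • x ∈ M)
    (A : Set (Subgroup G))
    (hstabA : ∀ x ∈ M, MulAction.stabilizer G x ∈ A)
    (hstabg : ∀ (g : G) (x : X),
      MulAction.stabilizer G (g • x) = MulAction.stabilizer G x)
    (hFixClosed : ∀ H : Subgroup G, IsClosed {x : X | H ≤ MulAction.stabilizer G x})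
    (O : Subgroup G → Set X)
    (hOopen : ∀ H, IsOpen (O H))
    (hOM : ∀ H, O H ⊆ M)
    (hOstab : ∀ H, ∀ x ∈ O H, MulAction.stabilizer G x ≤ H)
    (hOinv : ∀ H, ∀ (g : G), ∀ x ∈ O H, g • x ∈ O H)
    (hOD : ∀ H, ∀ x ∈ M, MulAction.stabilizer G x = H → x ∈ O H) :
    ∀ B : Finset (Subgroup G), ↑B ⊆ A →
      (∀ H ∈ B, ∀ H' ∈ A, H ≤ H' → H' ∈ B) →
    ∃ V K : Subgroup G → Set X,
      (∀ H ∈ B, IsOpen (V H)) ∧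
      (∀ H ∈ B, V H ⊆ K H ∩ M) ∧
      (∀ H ∈ B, K H ∩ M ⊆ O H) ∧
      (∀ H ∈ B, IsClosed (K H)) ∧
      (∀ H ∈ B, ∀ (g : G), ∀ x ∈ V H, g • x ∈ V H) ∧
      (∀ H ∈ B, ∀ (g : G), ∀ x ∈ K H, g • x ∈ K H) ∧
      (∀ H ∈ B, ∀ H' ∈ B, ¬ H ≤ H' → ¬ H' ≤ H → K H ∩ K H' ∩ M = ∅) ∧
      (∀ x ∈ M, MulAction.stabilizer G x ∈ B → ∃ H ∈ B, x ∈ V H) := by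
  classical
  intro B
  induction B using Finset.strongInduction with
  | _ B IH =>
  intro hBA hBup
  rcases B.eq_empty_or_nonempty with rfl | hBne
  · exact ⟨fun _ => ∅, fun _ => ∅, by simp, by simp, by simp, by simp, by simp, by simp,
      by simp, by simp⟩
  obtain ⟨H₀, hH₀B, hH₀min⟩ := B.exists_minimal hBne
  set B' : Finset (Subgroup G) := B.erase H₀ with hB'def
  have hB'ss : B' ⊂ B := Finset.erase_ssubset hH₀B
  have hB'A : ↑B' ⊆ A := fun H hH => hBA (Finset.mem_of_mem_erase hH)
  have hB'up : ∀ H ∈ B', ∀ H' ∈ A, H ≤ H' → H' ∈ B' := by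
    intro H hH H' hH'A hle
    have hHB : H ∈ B := Finset.mem_of_mem_erase hH
    have hH'B : H' ∈ B := hBup H hHB H' hH'A hle
    refine Finset.mem_erase.mpr ⟨?_, hH'B⟩
    rintro rfl
    exact Finset.ne_of_mem_erase hH (le_antisymm hle (hH₀min hHB hle))
  obtain ⟨V', K', p1, p2, p3, p4, p5, p6, p7, p8⟩ := IH B' hB'ss hB'A hB'up
  -- the part of C(H₀) not yet covered
  set D : Set X :=
    (M ∩ {x | H₀ ≤ MulAction.stabilizer G x}) \ ⋃ H ∈ B', V' H with hDdef
  have hDstab : ∀ x ∈ D, MulAction.stabilizer G x = H₀ := by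
    intro x hx
    obtain ⟨⟨hxM, hxFix⟩, hxn⟩ := hx
    by_contra hne
    have hlt : H₀ < MulAction.stabilizer G x := lt_of_le_of_ne hxFix (fun h => hne h.symm)
    have hsB : MulAction.stabilizer G x ∈ B := hBup H₀ hH₀B _ (hstabA x hxM) hlt.le
    have hsB' : MulAction.stabilizer G x ∈ B' :=
      Finset.mem_erase.mpr ⟨fun h => hne h, hsB⟩
    obtain ⟨H, hHB', hxV⟩ := p8 x hxM hsB'
    exact hxn (Set.mem_biUnion hHB' hxV)
  have hDO : D ⊆ O H₀ := fun x hx => hOD H₀ x hx.1.1 (hDstab x hx)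
  have hU'open : IsOpen (⋃ H ∈ B', V' H) := isOpen_biUnion fun H hH => p1 H hH
  have hclD : closure D ⊆ {x | H₀ ≤ MulAction.stabilizer G x} ∩ (⋃ H ∈ B', V' H)ᶜ :=
    closure_minimal (fun x hx => ⟨hx.1.2, hx.2⟩)
      ((hFixClosed H₀).inter hU'open.isClosed_compl)
  have hDclM : closure D ∩ M ⊆ D := by
    intro x ⟨hxc, hxM⟩
    exact ⟨⟨hxM, (hclD hxc).1⟩, (hclD hxc).2⟩
  have hDinv : ∀ (g : G), ∀ x ∈ D, g • x ∈ D := by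
    intro g x hx
    obtain ⟨⟨hxM, hxFix⟩, hxn⟩ := hx
    refine ⟨⟨hMpt g x hxM, ?_⟩, ?_⟩
    · rw [Set.mem_setOf_eq, hstabg]; exact hxFix
    · intro hmem
      obtain ⟨H, hHB', hxV⟩ := Set.mem_iUnion₂.mp hmem
      refine hxn (Set.mem_biUnion hHB' ?_)
      have := p5 H hHB' g⁻¹ _ hxV
      rwa [inv_smul_smul] at this
  -- the open set in which we must place the new member of the cover
  set Bi : Finset (Subgroup G) := B'.filter (fun H => ¬ H ≤ H₀ ∧ ¬ H₀ ≤ H) with hBidef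
  set P : Set X := O H₀ \ ⋃ H ∈ Bi, K' H with hPdef
  have hPopen : IsOpen P := by
    refine (hOopen H₀).sdiff (Bi.finite_toSet.isClosed_biUnion fun H hH => ?_)
    exact p4 H (Finset.mem_of_mem_filter H hH)
  have hDP : D ⊆ P := by
    intro x hx
    refine ⟨hDO hx, ?_⟩
    intro hmem
    obtain ⟨H, hHBi, hxK⟩ := Set.mem_iUnion₂.mp hmem
    obtain ⟨hHB', hnle, hnge⟩ := Finset.mem_filter.mp hHBi
    have hxO : x ∈ O H := p3 H hHB' ⟨hxK, hx.1.1⟩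
    have : MulAction.stabilizer G x ≤ H := hOstab H x hxO
    rw [hDstab x hx] at this
    exact hnge this
  have hPinv : ∀ (g : G), ∀ x ∈ P, g • x ∈ P := by
    intro g x hx
    refine ⟨hOinv H₀ g x hx.1, ?_⟩
    intro hmem
    obtain ⟨H, hHBi, hxK⟩ := Set.mem_iUnion₂.mp hmem
    refine hx.2 (Set.mem_biUnion hHBi ?_)
    have := p6 H (Finset.mem_of_mem_filter H hHBi) g⁻¹ _ hxK
    rwa [inv_smul_smul] at this
  -- metric shrinking
  set V₀ : Set X :=
    M ∩ {x | EMetric.infEdist x D < EMetric.infEdist x (M \ P)} with hV₀def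
  have hV₀open : IsOpen V₀ :=
    hMopen.inter (isOpen_lt EMetric.continuous_infEdist EMetric.continuous_infEdist)
  have hclMP : closure (M \ P) ⊆ Pᶜ :=
    closure_minimal (fun y hy => hy.2) hPopen.isClosed_compl
  have hDV₀ : D ⊆ V₀ := by
    intro x hx
    refine ⟨hx.1.1, ?_⟩
    have hx0 : EMetric.infEdist x D = 0 := EMetric.infEdist_zero_of_mem hx
    have hx1 : EMetric.infEdist x (M \ P) ≠ 0 := by
      intro h
      exact hclMP (EMetric.mem_closure_iff_infEdist_zero.mpr h) (hDP hx)
    rw [Set.mem_setOf_eq, hx0]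
    exact pos_iff_ne_zero.mpr hx1
  have hclV₀P : closure V₀ ∩ M ⊆ P := by
    rintro x ⟨hxc, hxM⟩
    have hle : EMetric.infEdist x D ≤ EMetric.infEdist x (M \ P) := by
      have hsub : closure V₀ ⊆
          {y : X | EMetric.infEdist y D ≤ EMetric.infEdist y (M \ P)} :=
        closure_minimal (fun y hy => Set.mem_setOf_eq ▸ le_of_lt hy.2)
          (isClosed_le EMetric.continuous_infEdist EMetric.continuous_infEdist)
      exact hsub hxc
    by_contra hxP
    have h0 : EMetric.infEdist x (M \ P) = 0 :=
      EMetric.infEdist_zero_of_mem ⟨hxM, hxP⟩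
    have hD0 : EMetric.infEdist x D = 0 := le_antisymm (h0 ▸ hle) zero_le
    have hxD : x ∈ closure D := EMetric.mem_closure_iff_infEdist_zero.mpr hD0
    exact hxP (hDP (hDclM ⟨hxD, hxM⟩))
  -- invariantize
  set Vn : Set X := ((Set.univ : Set G) • V₀ᶜ)ᶜ with hVndef
  have hVnmem : ∀ x : X, x ∈ Vn ↔ ∀ g : G, g • x ∈ V₀ := by
    intro x
    rw [hVndef, Set.mem_compl_iff]
    constructor
    · intro hx g
      by_contra hgx
      exact hx (Set.mem_smul.mpr ⟨g⁻¹, Set.mem_univ _, g • x, hgx, inv_smul_smul g x⟩)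
    · intro hx hmem
      obtain ⟨g, -, y, hy, hgy⟩ := Set.mem_smul.mp hmem
      apply hy
      have := hx g⁻¹
      rw [← hgy, inv_smul_smul] at this
      exact this
  have hVnopen : IsOpen Vn :=
    (hV₀open.isClosed_compl.smul_left_of_isCompact isCompact_univ).isOpen_compl
  have hVnsub : Vn ⊆ V₀ := by
    intro x hx
    have := (hVnmem x).mp hx 1
    rwa [one_smul] at this
  have hDVn : D ⊆ Vn := by
    intro x hx
    exact (hVnmem x).mpr fun g => hDV₀ (hDinv g x hx)
  have hVninv : ∀ (g : G), ∀ x ∈ Vn, g • x ∈ Vn := by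
    intro g x hx
    refine (hVnmem _).mpr fun h => ?_
    rw [smul_smul]
    exact (hVnmem x).mp hx (h * g)
  set Kn : Set X := (Set.univ : Set G) • closure V₀ with hKndef
  have hKnclosed : IsClosed Kn :=
    isClosed_closure.smul_left_of_isCompact isCompact_univ
  have hKninv : ∀ (g : G), ∀ x ∈ Kn, g • x ∈ Kn := by
    intro g x hx
    obtain ⟨h, -, y, hy, rfl⟩ := Set.mem_smul.mp hx
    rw [smul_smul]
    exact Set.mem_smul.mpr ⟨g * h, Set.mem_univ _, y, hy, rfl⟩
  have hVnKn : Vn ⊆ Kn := fun x hx =>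
    Set.mem_smul.mpr ⟨1, Set.mem_univ _, x, subset_closure (hVnsub hx), one_smul _ _⟩
  have hKnM : Kn ∩ M ⊆ P := by
    rintro x ⟨hxK, hxM⟩
    obtain ⟨g, -, y, hy, rfl⟩ := Set.mem_smul.mp hxK
    have hyM : y ∈ M := by
      have := hMpt g⁻¹ _ hxM
      rwa [inv_smul_smul] at this
    exact hPinv g y (hclV₀P ⟨hy, hyM⟩)
  -- assemble
  refine ⟨Function.update V' H₀ Vn, Function.update K' H₀ Kn, ?_, ?_, ?_, ?_, ?_, ?_, ?_, ?_⟩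
  · intro H hH
    by_cases h : H = H₀
    · subst h; simpa using hVnopen
    · rw [Function.update_of_ne h]
      exact p1 H (Finset.mem_erase.mpr ⟨h, hH⟩)
  · intro H hH
    by_cases h : H = H₀
    · subst h
      simp only [Function.update_self]
      exact fun x hx => ⟨hVnKn hx, (hVnsub hx).1⟩
    · rw [Function.update_of_ne h, Function.update_of_ne h]
      exact p2 H (Finset.mem_erase.mpr ⟨h, hH⟩)
  · intro H hH
    by_cases h : H = H₀
    · subst h
      simp only [Function.update_self]
      exact fun x hx => (hKnM hx).1
    · rw [Function.update_of_ne h]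
      exact p3 H (Finset.mem_erase.mpr ⟨h, hH⟩)
  · intro H hH
    by_cases h : H = H₀
    · subst h; simpa using hKnclosed
    · rw [Function.update_of_ne h]
      exact p4 H (Finset.mem_erase.mpr ⟨h, hH⟩)
  · intro H hH
    by_cases h : H = H₀
    · subst h; simpa using hVninv
    · rw [Function.update_of_ne h]
      exact p5 H (Finset.mem_erase.mpr ⟨h, hH⟩)
  · intro H hH
    by_cases h : H = H₀
    · subst h; simpa using hKninv
    · rw [Function.update_of_ne h]
      exact p6 H (Finset.mem_erase.mpr ⟨h, hH⟩)
  · -- pairwise disjointness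
    have key : ∀ H ∈ B', ¬ H ≤ H₀ → ¬ H₀ ≤ H → Kn ∩ K' H ∩ M = ∅ := by
      intro H hH hnle hnge
      rw [Set.eq_empty_iff_forall_notMem]
      rintro x ⟨⟨hxKn, hxK⟩, hxM⟩
      have hxP : x ∈ P := hKnM ⟨hxKn, hxM⟩
      exact hxP.2 (Set.mem_biUnion (Finset.mem_filter.mpr ⟨hH, hnle, hnge⟩) hxK)
    intro H hH H' hH' hnle hnge
    by_cases h : H = H₀
    · subst h
      have h' : H' ≠ H := fun he => hnle (he ▸ le_refl H')
      rw [Function.update_self, Function.update_of_ne h']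
      exact key H' (Finset.mem_erase.mpr ⟨h', hH'⟩) hnge hnle
    · by_cases h' : H' = H₀
      · subst h'
        rw [Function.update_of_ne h, Function.update_self]
        have := key H (Finset.mem_erase.mpr ⟨h, hH⟩) hnle hnge
        rw [← this]
        congr 1
        exact Set.inter_comm _ _
      · rw [Function.update_of_ne h, Function.update_of_ne h']
        exact p7 H (Finset.mem_erase.mpr ⟨h, hH⟩) H' (Finset.mem_erase.mpr ⟨h', hH'⟩)
          hnle hnge
  · -- coverage
    intro x hxM hxB
    by_cases hcov : x ∈ ⋃ H ∈ B', V' H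
    · obtain ⟨H, hHB', hxV⟩ := Set.mem_iUnion₂.mp hcov
      refine ⟨H, Finset.mem_of_mem_erase hHB', ?_⟩
      rw [Function.update_of_ne (Finset.ne_of_mem_erase hHB')]
      exact hxV
    · by_cases hs : MulAction.stabilizer G x = H₀
      · refine ⟨H₀, hH₀B, ?_⟩
        rw [Function.update_self]
        exact hDVn ⟨⟨hxM, by rw [Set.mem_setOf_eq, hs]⟩, hcov⟩
      · exfalso
        refine hcov ?_
        obtain ⟨H, hHB', hxV⟩ := p8 x hxM (Finset.mem_erase.mpr ⟨hs, hxB⟩)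
        exact Set.mem_biUnion hHB' hxV
/-- Existence of a good open covering for a compact abelian group action:
the open cover `{V_H}` indexed by the (finitely many) stabilizer subgroups is
`G`-invariant, shrinks stabilizers, is nested on overlaps, and can be chosen
subordinate to a given equivariant family of neighborhoods `V_x`. -/
theorem exists_good_open_covering
    {G : Type*} [CommGroup G] [TopologicalSpace G] [IsTopologicalGroup G] [CompactSpace G]
    {X : Type*} [TopologicalSpace X] [CompactSpace X] [TopologicalSpace.MetrizableSpace X]
    [MulAction G X] [ContinuousSMul G X]
    (M : Set X) (hMopen : IsOpen M) (hMinv : ∀ g : G, g • M = M)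
    (A : Set (Subgroup G))
    (hAdef : A = {H : Subgroup G | ∃ x ∈ M, MulAction.stabilizer G x = H})
    (hAfin : A.Finite)
    (Vx : X → Set X)
    (hVx : ∀ x ∈ M, x ∈ Vx x ∧ IsOpen (Vx x))
    (hVxEquiv : ∀ (g : G), ∀ x ∈ M, Vx (g • x) = g • Vx x) :
    ∃ V : Subgroup G → Set X,
      (∀ H ∈ A, IsOpen (V H)) ∧
      (∀ H ∈ A, V H ⊆ M) ∧
      (⋃ H ∈ A, V H) = M ∧
      (∀ H ∈ A, ∀ g : G, g • V H = V H) ∧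
      (∀ H ∈ A, ∀ x ∈ V H, MulAction.stabilizer G x ≤ H) ∧
      (∀ H ∈ A, ∀ H' ∈ A, (V H ∩ V H').Nonempty → H ≤ H' ∨ H' ≤ H) ∧
      (∀ H ∈ A, V H ⊆ ⋃ x ∈ {x | x ∈ M ∧ MulAction.stabilizer G x = H}, Vx x) := by
  classical
  letI : MetricSpace X := TopologicalSpace.metrizableSpaceMetric X
  have hMpt : ∀ (g : G), ∀ x ∈ M, g • x ∈ M := by
    intro g x hx
    rw [← hMinv g]
    exact Set.smul_mem_smul_set hx
  have hstabg : ∀ (g : G) (x : X),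
      MulAction.stabilizer G (g • x) = MulAction.stabilizer G x := by
    intro g x
    ext h
    simp only [MulAction.mem_stabilizer_iff]
    constructor
    · intro he
      have h2 : g • h • x = g • x := by
        rw [← mul_smul, mul_comm, mul_smul]; exact he
      exact smul_left_cancel g h2
    · intro he
      rw [← mul_smul, mul_comm, mul_smul, he]
  have hstabA : ∀ x ∈ M, MulAction.stabilizer G x ∈ A := by
    intro x hx
    rw [hAdef]
    exact ⟨x, hx, rfl⟩
  have hFixClosed : ∀ H : Subgroup G, IsClosed {x : X | H ≤ MulAction.stabilizer G x} := by
    intro H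
    have he : {x : X | H ≤ MulAction.stabilizer G x}
        = ⋂ h ∈ (H : Set G), {x : X | h • x = x} := by
      ext x
      simp only [Set.mem_setOf_eq, Set.mem_iInter, SetLike.mem_coe, SetLike.le_def,
        MulAction.mem_stabilizer_iff]
    rw [he]
    exact isClosed_biInter fun h _ => isClosed_eq (continuous_const_smul h) continuous_id
  -- the open sets U H = {x ∈ M | stab x ≤ H}
  have hUopen : ∀ H : Subgroup G,
      IsOpen {x : X | x ∈ M ∧ MulAction.stabilizer G x ≤ H} := by
    intro H
    have he : {x : X | x ∈ M ∧ MulAction.stabilizer G x ≤ H}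
        = M \ ⋃ H' ∈ {H' ∈ A | ¬ H' ≤ H}, {x : X | H' ≤ MulAction.stabilizer G x} := by
      ext x
      simp only [Set.mem_setOf_eq, Set.mem_diff, Set.mem_iUnion, Set.mem_sep_iff,
        exists_prop, not_exists, not_and]
      constructor
      · rintro ⟨hxM, hle⟩
        refine ⟨hxM, ?_⟩
        rintro H' ⟨hH'A, hnle⟩ hH'
        exact hnle (le_trans hH' hle)
      · rintro ⟨hxM, hn⟩
        refine ⟨hxM, ?_⟩
        by_contra hnle
        exact hn (MulAction.stabilizer G x) ⟨hstabA x hxM, hnle⟩ le_rfl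
    rw [he]
    exact hMopen.sdiff
      ((hAfin.subset (Set.sep_subset _ _)).isClosed_biUnion fun H' _ => hFixClosed H')
  -- the basic invariant open sets O H
  set O : Subgroup G → Set X := fun H =>
    {x : X | x ∈ M ∧ MulAction.stabilizer G x ≤ H} ∩
      ⋃ y ∈ {y : X | y ∈ M ∧ MulAction.stabilizer G y = H}, Vx y with hOdef
  have hOopen : ∀ H, IsOpen (O H) :=
    fun H => (hUopen H).inter (isOpen_biUnion fun y hy => (hVx y hy.1).2)
  have hOM : ∀ H, O H ⊆ M := fun H x hx => hx.1.1
  have hOstab : ∀ H, ∀ x ∈ O H, MulAction.stabilizer G x ≤ H := fun H x hx => hx.1.2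
  have hOinv : ∀ H, ∀ (g : G), ∀ x ∈ O H, g • x ∈ O H := by
    intro H g x hx
    obtain ⟨⟨hxM, hxle⟩, hxU⟩ := hx
    refine ⟨⟨hMpt g x hxM, by rw [hstabg]; exact hxle⟩, ?_⟩
    obtain ⟨y, hy, hxy⟩ := Set.mem_iUnion₂.mp hxU
    refine Set.mem_biUnion (show g • y ∈ _ from ⟨hMpt g y hy.1, by rw [hstabg]; exact hy.2⟩) ?_
    rw [hVxEquiv g y hy.1]
    exact Set.smul_mem_smul_set hxy
  have hOD : ∀ H, ∀ x ∈ M, MulAction.stabilizer G x = H → x ∈ O H := by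
    intro H x hxM hs
    exact ⟨⟨hxM, hs.le⟩, Set.mem_biUnion (show x ∈ _ from ⟨hxM, hs⟩) (hVx x hxM).1⟩
  -- apply the induction
  obtain ⟨V, K, h1, h2, h3, h4, h5, h6, h7, h8⟩ :=
    good_cover_induction M hMopen hMpt A hstabA hstabg hFixClosed O hOopen hOM hOstab
      hOinv hOD hAfin.toFinset (by simp) (fun H _ H' hH' _ => hAfin.mem_toFinset.mpr hH')
  have hmem : ∀ H, H ∈ A ↔ H ∈ hAfin.toFinset := fun H => (hAfin.mem_toFinset).symm
  refine ⟨V, ?_, ?_, ?_, ?_, ?_, ?_, ?_⟩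
  · intro H hH; exact h1 H ((hmem H).mp hH)
  · intro H hH; exact fun x hx => (h2 H ((hmem H).mp hH) hx).2
  · apply Set.Subset.antisymm
    · refine Set.iUnion₂_subset fun H hH => fun x hx => (h2 H ((hmem H).mp hH) hx).2
    · intro x hx
      obtain ⟨H, hHB, hxV⟩ := h8 x hx (hAfin.mem_toFinset.mpr (hstabA x hx))
      exact Set.mem_biUnion (hAfin.mem_toFinset.mp hHB) hxV
  · intro H hH g
    have hB := (hmem H).mp hH
    apply Set.Subset.antisymm
    · rintro _ ⟨y, hy, rfl⟩
      exact h5 H hB g y hy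
    · intro x hx
      exact ⟨g⁻¹ • x, h5 H hB g⁻¹ x hx, smul_inv_smul g x⟩
  · intro H hH x hx
    have hB := (hmem H).mp hH
    exact hOstab H x (h3 H hB (h2 H hB hx))
  · intro H hH H' hH' ⟨x, hx, hx'⟩
    have hB := (hmem H).mp hH
    have hB' := (hmem H').mp hH'
    by_contra hc
    push_neg at hc
    have := h7 H hB H' hB' hc.1 hc.2
    rw [Set.eq_empty_iff_forall_notMem] at this
    exact this x ⟨⟨(h2 H hB hx).1, (h2 H' hB' hx').1⟩, (h2 H hB hx).2⟩
  · intro H hH x hx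
    have hB := (hmem H).mp hH
    exact (h3 H hB (h2 H hB hx)).2
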